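/- Let k be odd, n = 2k+1, σ ∈ S_{n+1} with σ(t) = n+1 for some t ∈ [n]. Define f^σ on subsets of [n] by: f^σ(X) = σ(X) if |X| even and t ∉ X; f^σ(X) = [n] \ σ(X \ {t}) if |X| even and t ∈ X; f^σ(X) = [n] \ σ(X ∪ {n+1}) if |X| odd and t ∉ X; f^σ(X) = σ((X ∪ {n+1}) \ {t}) if |X| odd and t ∈ X. Then for all X, Y ⊆ [n], |X △ Y| = k if and only if |f^σ(X) △ f^σ(Y)| = k; i.e., f^σ is an automorphism of H(2k+1, k). -/

import Mathlib

open Finset symmDiff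

/-- The graph `H(n,k)` on subsets of `[n]`: `X ~ Y` iff `|X ∆ Y| = k`. -/
def HGraph (n k : ℕ) : SimpleGraph (Finset (Fin n)) where
  Adj X Y := (X ∆ Y).card = k ∧ X ≠ Y
  symm := by
    constructor
    intro X Y h
    exact ⟨by rw [symmDiff_comm]; exact h.1, h.2.symm⟩
  loopless := ⟨fun X h => h.2 rfl⟩

/-- For `σ ∈ S_{n+1}`, the four-case map `f^σ` on subsets of `[n]`:
`f^σ(X) = σ(X)` if `|X|` even and `t ∉ X`; `= [n] \ σ(X \ {t})` if `|X|` even and `t ∈ X`;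
`= [n] \ σ(X ∪ {n+1})` if `|X|` odd and `t ∉ X`; `= σ((X ∪ {n+1}) \ {t})` if `|X|` odd and
`t ∈ X`, where `t = σ⁻¹(n+1)`; and `f^σ = σ` when `σ(n+1) = n+1`.  Here `[n+1]` is
modelled by `Fin (n+1)` with `n+1` corresponding to `Fin.last n`, and `t ∈ X` is
equivalent to `Fin.last n ∈ σ(X)`. -/
def gperm (n : ℕ) (σ : Equiv.Perm (Fin (n + 1))) (X : Finset (Fin n)) : Finset (Fin n) :=
  let Y := X.image (fun i => σ (Fin.castSucc i))
  if σ (Fin.last n) = Fin.last n then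
    Finset.univ.filter (fun i => Fin.castSucc i ∈ Y)
  else if Even X.card then
    (if Fin.last n ∈ Y then Finset.univ.filter (fun i => Fin.castSucc i ∉ Y)
     else Finset.univ.filter (fun i => Fin.castSucc i ∈ Y))
  else
    (if Fin.last n ∈ Y then
      Finset.univ.filter (fun i => Fin.castSucc i ∈ insert (σ (Fin.last n)) Y)
     else Finset.univ.filter (fun i => Fin.castSucc i ∉ insert (σ (Fin.last n)) Y))


/-- Restriction of a subset of `Fin (n+1)` to `Fin n`. -/
def res {n : ℕ} (Z : Finset (Fin (n + 1))) : Finset (Fin n) :=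
  Finset.univ.filter (fun i => Fin.castSucc i ∈ Z)

/-- Even-size lift of a subset of `Fin n` to `Fin (n+1)`. -/
def lft {n : ℕ} (X : Finset (Fin n)) : Finset (Fin (n + 1)) :=
  if Even X.card then X.image Fin.castSucc else insert (Fin.last n) (X.image Fin.castSucc)

lemma mem_res {n : ℕ} {Z : Finset (Fin (n + 1))} {i : Fin n} :
    i ∈ res Z ↔ Fin.castSucc i ∈ Z := by simp [res]

lemma res_symmDiff {n : ℕ} (Z W : Finset (Fin (n + 1))) :
    res (Z ∆ W) = res Z ∆ res W := by
  ext i; simp [mem_res, Finset.mem_symmDiff]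

lemma card_res {n : ℕ} (Z : Finset (Fin (n + 1))) :
    Z.card = (res Z).card + (if Fin.last n ∈ Z then 1 else 0) := by
  classical
  have h2 : (res Z).image Fin.castSucc = Z.erase (Fin.last n) := by
    ext z
    simp only [Finset.mem_image, mem_res, Finset.mem_erase]
    constructor
    · rintro ⟨i, hi, rfl⟩
      exact ⟨(Fin.castSucc_lt_last i).ne, hi⟩
    · rintro ⟨hne, hz⟩
      obtain ⟨i, rfl⟩ := Fin.exists_castSucc_eq.2 hne
      exact ⟨i, hz, rfl⟩
  have h1 : (res Z).card = (Z.erase (Fin.last n)).card := by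
    rw [← h2, Finset.card_image_of_injective _ (Fin.castSucc_injective n)]
  by_cases h : Fin.last n ∈ Z
  · have h3 := Finset.card_erase_of_mem h
    have hpos : 1 ≤ Z.card := Finset.card_pos.2 ⟨_, h⟩
    simp only [h, if_pos]
    omega
  · rw [h1, Finset.erase_eq_of_notMem h]
    simp [h]

lemma notmem_castSucc_image {n : ℕ} (W : Finset (Fin n)) :
    Fin.last n ∉ W.image Fin.castSucc := by
  simp only [Finset.mem_image]
  rintro ⟨i, -, h⟩
  exact (Fin.castSucc_lt_last i).ne h

lemma res_lft {n : ℕ} (X : Finset (Fin n)) : res (lft X) = X := by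
  unfold lft
  split <;> ext i <;>
    simp [mem_res, (Fin.castSucc_lt_last i).ne, (Fin.castSucc_injective n).eq_iff]

lemma last_mem_lft {n : ℕ} (X : Finset (Fin n)) :
    Fin.last n ∈ lft X ↔ ¬ Even X.card := by
  unfold lft
  by_cases h : Even X.card
  · rw [if_pos h]
    simp [h, notmem_castSucc_image X]
  · rw [if_neg h]
    simp [h]

lemma even_card_symmDiff {n : ℕ} (X Y : Finset (Fin n)) :
    Even (X ∆ Y).card ↔ (Even X.card ↔ Even Y.card) := by
  classical
  have h1 : (X ∩ Y).card + (X ∪ Y).card = X.card + Y.card :=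
    Finset.card_inter_add_card_union X Y
  have h2 : (X ∆ Y).card + (X ∩ Y).card = (X ∪ Y).card := by
    have h : X ∆ Y = (X ∪ Y) \ (X ∩ Y) := by
      ext i; simp [Finset.mem_symmDiff]; tauto
    rw [h, Finset.card_sdiff_add_card_eq_card (Finset.inter_subset_union)]
  simp only [Nat.even_iff] at *
  omega

lemma gperm_eq {n : ℕ} (σ : Equiv.Perm (Fin (n + 1))) (hσ : σ (Fin.last n) ≠ Fin.last n)
    (X : Finset (Fin n)) :
    gperm n σ X =
      if (Fin.last n ∈ (lft X).image σ) ↔ (Fin.last n ∈ lft X) then res ((lft X).image σ)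
      else (res ((lft X).image σ))ᶜ := by
  classical
  have himg : (X.image Fin.castSucc).image σ = X.image (fun i => σ (Fin.castSucc i)) :=
    Finset.image_image
  unfold gperm lft res
  rw [if_neg hσ]
  by_cases he : Even X.card
  · simp only [if_pos he]
    by_cases hY : Fin.last n ∈ X.image (fun i => σ (Fin.castSucc i))
    · rw [if_pos hY, if_neg (by simp [himg, hY, notmem_castSucc_image X])]
      rw [Finset.compl_filter]
      simp [himg]
    · rw [if_neg hY, if_pos (by simp [himg, hY, notmem_castSucc_image X])]
      simp [himg]
  · simp only [if_neg he]
    have himg2 : (insert (Fin.last n) (X.image Fin.castSucc)).image σ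
        = insert (σ (Fin.last n)) (X.image (fun i => σ (Fin.castSucc i))) := by
      rw [Finset.image_insert, himg]
    by_cases hY : Fin.last n ∈ X.image (fun i => σ (Fin.castSucc i))
    · rw [if_pos hY, if_pos (by simp [himg2, Finset.mem_insert, hY])]
      simp [himg2]
    · rw [if_neg hY, if_neg (by simp [himg2, Finset.mem_insert, hY, Ne.symm hσ])]
      rw [Finset.compl_filter]
      simp [himg2]

lemma compl_symmDiff_card {n : ℕ} (A B : Finset (Fin n)) :
    ((Aᶜ ∆ B).card = n - (A ∆ B).card) ∧ ((A ∆ Bᶜ).card = n - (A ∆ B).card) := by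
  have h1 : Aᶜ ∆ B = (A ∆ B)ᶜ := by
    ext i; simp only [Finset.mem_compl, Finset.mem_symmDiff]; tauto
  have h2 : A ∆ Bᶜ = (A ∆ B)ᶜ := by
    ext i; simp only [Finset.mem_compl, Finset.mem_symmDiff]; tauto
  rw [h1, h2, Finset.card_compl]
  simp

lemma compl_compl_symmDiff {n : ℕ} (A B : Finset (Fin n)) : Aᶜ ∆ Bᶜ = A ∆ B := by
  ext i; simp only [Finset.mem_compl, Finset.mem_symmDiff]; tauto

lemma iff_helper1 {p q p' q' : Prop} (h1 : p ↔ ¬q) (h2 : p' ↔ ¬q') :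
    (p ↔ ¬p') ↔ ¬(q ↔ q') := by tauto

lemma iff_helper2 {p q p' q' : Prop} (h1 : p ↔ ¬q) (h2 : ¬(p' ↔ ¬q')) :
    (p ↔ ¬p') ↔ (q ↔ q') := by tauto

lemma iff_helper3 {p q p' q' : Prop} (h1 : ¬(p ↔ ¬q)) (h2 : p' ↔ ¬q') :
    (p ↔ ¬p') ↔ (q ↔ q') := by tauto

lemma iff_helper4 {p q p' q' : Prop} (h1 : ¬(p ↔ ¬q)) (h2 : ¬(p' ↔ ¬q')) :
    (p ↔ ¬p') ↔ ¬(q ↔ q') := by tauto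

set_option maxHeartbeats 1000000 in
/-- For `k` odd, `n = 2k + 1`, and `σ ∈ S_{n+1}` with `σ(t) = n+1` for some `t ∈ [n]`:
for all `X, Y ⊆ [n]`, `|X ∆ Y| = k` iff `|f^σ(X) ∆ f^σ(Y)| = k`; i.e. `f^σ` is an
automorphism of `H(2k+1,k)`. -/
theorem stmt_13 (k n : ℕ) (hk : Odd k) (hn : n = 2 * k + 1)
    (σ : Equiv.Perm (Fin (n + 1))) (t : Fin n) (ht : σ (Fin.castSucc t) = Fin.last n) :
    ∀ X Y : Finset (Fin n),
      (X ∆ Y).card = k ↔ (gperm n σ X ∆ gperm n σ Y).card = k := by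
  classical
  have hσ : σ (Fin.last n) ≠ Fin.last n := by
    intro h
    exact (Fin.castSucc_lt_last t).ne (σ.injective (ht.trans h.symm))
  intro X Y
  rw [gperm_eq σ hσ X, gperm_eq σ hσ Y]
  set m := (X ∆ Y).card with hm
  set ZX := (lft X).image σ with hZX
  set ZY := (lft Y).image σ with hZY
  have hZd : ZX ∆ ZY = (lft X ∆ lft Y).image σ :=
    (Finset.image_symmDiff _ _ σ.injective).symm
  have hmemimg : ∀ A : Finset (Fin (n + 1)),
      (Fin.last n ∈ A.image σ) ↔ Fin.castSucc t ∈ A := by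
    intro A
    simp only [Finset.mem_image]
    constructor
    · rintro ⟨a, ha, hae⟩
      rwa [← σ.injective (hae.trans ht.symm)]
    · intro h; exact ⟨_, h, ht⟩
  have hresS : res (lft X ∆ lft Y) = X ∆ Y := by
    rw [res_symmDiff, res_lft, res_lft]
  set c := (res ZX ∆ res ZY).card with hc
  have hres2 : res (ZX ∆ ZY) = res ZX ∆ res ZY := res_symmDiff _ _
  have hcardS : (lft X ∆ lft Y).card
      = m + (if Fin.last n ∈ lft X ∆ lft Y then 1 else 0) := by
    rw [hm, card_res (lft X ∆ lft Y), hresS]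
  have hcardZ : (ZX ∆ ZY).card
      = c + (if Fin.last n ∈ ZX ∆ ZY then 1 else 0) := by
    rw [hc, card_res (ZX ∆ ZY), hres2]
  have hcardEq : (ZX ∆ ZY).card = (lft X ∆ lft Y).card := by
    rw [hZd, Finset.card_image_of_injective _ σ.injective]
  have hlastZ : Fin.last n ∈ ZX ∆ ZY ↔ t ∈ X ∆ Y := by
    rw [hZd, hmemimg, ← mem_res, hresS]
  have hparXY : Even m ↔ (Even X.card ↔ Even Y.card) := even_card_symmDiff X Y
  have hlastS : Fin.last n ∈ lft X ∆ lft Y ↔ ¬ Even m := by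
    rw [Finset.mem_symmDiff, last_mem_lft, last_mem_lft, hparXY]
    tauto
  have hflagX : (Fin.last n ∈ ZX ↔ Fin.last n ∈ lft X) ↔ ((t ∈ X) ↔ ¬ Even X.card) := by
    rw [hZX, hmemimg, ← mem_res, res_lft, last_mem_lft]
  have hflagY : (Fin.last n ∈ ZY ↔ Fin.last n ∈ lft Y) ↔ ((t ∈ Y) ↔ ¬ Even Y.card) := by
    rw [hZY, hmemimg, ← mem_res, res_lft, last_mem_lft]
  have htXY : t ∈ X ∆ Y ↔ ((t ∈ X) ↔ ¬ (t ∈ Y)) := by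
    rw [Finset.mem_symmDiff]
    by_cases h1 : t ∈ X <;> by_cases h2 : t ∈ Y <;> simp [h1, h2]
  have hcle : c ≤ n := by
    rw [hc]
    have h := Finset.card_le_univ (res ZX ∆ res ZY)
    rwa [Fintype.card_fin] at h
  have key : c + (if t ∈ X ∆ Y then 1 else 0) = m + (if ¬ Even m then 1 else 0) := by
    have h := hcardZ
    rw [hcardEq, hcardS] at h
    have e1 : (if Fin.last n ∈ ZX ∆ ZY then 1 else 0) = (if t ∈ X ∆ Y then 1 else 0) := by
      by_cases hh : t ∈ X ∆ Y
      · rw [if_pos hh, if_pos (hlastZ.2 hh)]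
      · rw [if_neg hh, if_neg (fun hx => hh (hlastZ.1 hx))]
    have e2 : (if Fin.last n ∈ lft X ∆ lft Y then 1 else 0) = (if ¬ Even m then 1 else 0) := by
      by_cases hh : Even m
      · rw [if_neg (not_not_intro hh), if_neg (fun hx => (hlastS.1 hx) hh)]
      · rw [if_pos hh, if_pos (hlastS.2 hh)]
    omega
  have hk1 : k % 2 = 1 := Nat.odd_iff.1 hk
  clear_value m ZX ZY c
  clear hZd hmemimg hresS hres2 hcardS hcardZ hcardEq hlastZ hlastS hZX hZY
  by_cases fX : (Fin.last n ∈ ZX ↔ Fin.last n ∈ lft X) <;>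
    by_cases fY : (Fin.last n ∈ ZY ↔ Fin.last n ∈ lft Y)
  · rw [if_pos fX, if_pos fY, ← hc]
    have hagree : t ∈ X ∆ Y ↔ ¬ Even m := by
      rw [htXY, hparXY]
      exact iff_helper1 (hflagX.1 fX) (hflagY.1 fY)
    by_cases hEm : Even m
    · rw [if_neg (fun h => (hagree.1 h) hEm), if_neg (not_not_intro hEm)] at key
      omega
    · rw [if_pos (hagree.2 hEm), if_pos hEm] at key
      omega
  · rw [if_pos fX, if_neg fY, (compl_symmDiff_card (res ZX) (res ZY)).2, ← hc]
    have hdis : t ∈ X ∆ Y ↔ Even m := by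
      rw [htXY, hparXY]
      exact iff_helper2 (hflagX.1 fX) (fun h => fY (hflagY.2 h))
    by_cases hEm : Even m <;> rw [Nat.even_iff] at hEm
    · rw [if_pos (hdis.2 (Nat.even_iff.2 hEm)),
        if_neg (not_not_intro (Nat.even_iff.2 hEm))] at key
      omega
    · rw [if_neg (fun h => hEm (Nat.even_iff.1 (hdis.1 h))),
        if_pos (fun h => hEm (Nat.even_iff.1 h))] at key
      omega
  · rw [if_neg fX, if_pos fY, (compl_symmDiff_card (res ZX) (res ZY)).1, ← hc]
    have hdis : t ∈ X ∆ Y ↔ Even m := by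
      rw [htXY, hparXY]
      exact iff_helper3 (fun h => fX (hflagX.2 h)) (hflagY.1 fY)
    by_cases hEm : Even m <;> rw [Nat.even_iff] at hEm
    · rw [if_pos (hdis.2 (Nat.even_iff.2 hEm)),
        if_neg (not_not_intro (Nat.even_iff.2 hEm))] at key
      omega
    · rw [if_neg (fun h => hEm (Nat.even_iff.1 (hdis.1 h))),
        if_pos (fun h => hEm (Nat.even_iff.1 h))] at key
      omega
  · rw [if_neg fX, if_neg fY, compl_compl_symmDiff, ← hc]
    have hagree : t ∈ X ∆ Y ↔ ¬ Even m := by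
      rw [htXY, hparXY]
      exact iff_helper4 (fun h => fX (hflagX.2 h)) (fun h => fY (hflagY.2 h))
    by_cases hEm : Even m
    · rw [if_neg (fun h => (hagree.1 h) hEm), if_neg (not_not_intro hEm)] at key
      omega
    · rw [if_pos (hagree.2 hEm), if_pos hEm] at key
      omega
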